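/- Let r, s be non-negative integers not both zero, d = r + 2s, and set d_i = 1 for i ≤ r and d_i = 2 for i > r. Let φ be the ℝ-linear map on ∏_{i=1}^{r+s} K_i (K_i = ℝ for i ≤ r, K_i = ℂ for i > r) given by φ(z_1,…,z_{r+s}) = (ξ_1 z_1,…,ξ_{r+s} z_{r+s}) with positive reals ξ_i satisfying ∏ ξ_i^{d_i} = 1. Then for every nonzero z = (z_1,…,z_{r+s}) with ∏_{i=1}^{r+s} |z_i|^{d_i} ≥ η^d for some η > 0, the Euclidean norm of φ(z) is at least √(d/2)·η. -/

import Mathlib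

/-- Let r, s not both be zero, d = r + 2s, and let
φ(z) = (ξ_1 z_1, …, ξ_{r+s} z_{r+s}) with ξ_i > 0 and ∏ ξ_i^{d_i} = 1
(d_i = 1 at real coordinates, 2 at complex ones). If
∏ |z_i|^{d_i} ≥ η^d for some η > 0, then the Euclidean norm of φ(z)
is at least √(d/2)·η. -/
theorem statement3 (r s : ℕ) (hrs : 0 < r + s) (η : ℝ) (hη : 0 < η)
    (ξx : Fin r → ℝ) (ξy : Fin s → ℝ)
    (hξx : ∀ i, 0 < ξx i) (hξy : ∀ j, 0 < ξy j)
    (hdet : (∏ i, ξx i) * ∏ j, (ξy j) ^ 2 = 1)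
    (x : Fin r → ℝ) (y : Fin s → ℂ)
    (hnorm : η ^ (r + 2 * s) ≤ (∏ i, |x i|) * ∏ j, ‖y j‖ ^ 2) :
    Real.sqrt ((r + 2 * s : ℝ) / 2) * η ≤
      Real.sqrt ((∑ i, (ξx i * x i) ^ 2) + ∑ j, ‖(ξy j : ℂ) * y j‖ ^ 2) := by
  set d : ℝ := (r + 2 * s : ℝ) with hd
  have hd0 : 0 < d := by
    have h : 0 < r + 2 * s := by omega
    calc (0:ℝ) < ((r + 2 * s : ℕ) : ℝ) := by exact_mod_cast h
      _ = d := by push_cast [hd]; ring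
  set a : Fin r → ℝ := fun i => ξx i * |x i| with ha
  set b : Fin s → ℝ := fun j => ξy j * ‖y j‖ with hb
  have ha0 : ∀ i, 0 ≤ a i := fun i => mul_nonneg (hξx i).le (abs_nonneg _)
  have hb0 : ∀ j, 0 ≤ b j := fun j =>
    mul_nonneg (hξy j).le (norm_nonneg _)
  -- key product bound
  have hprod : η ^ (r + 2 * s) ≤ (∏ i, a i) * ∏ j, (b j) ^ 2 := by
    have : (∏ i, a i) * ∏ j, (b j) ^ 2
        = ((∏ i, ξx i) * ∏ j, (ξy j) ^ 2) * ((∏ i, |x i|) * ∏ j, ‖y j‖ ^ 2) := by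
      simp only [ha, hb, mul_pow, Finset.prod_mul_distrib]
      ring
    rw [this, hdet, one_mul]
    exact hnorm
  -- AM-GM
  have hw : ∀ i ∈ (Finset.univ : Finset (Fin r ⊕ Fin s)), 0 ≤
      (Sum.elim (fun _ : Fin r => 1 / d) (fun _ : Fin s => 2 / d)) i := by
    rintro (i | j) _ <;> simp only [Sum.elim_inl, Sum.elim_inr] <;>
      exact div_nonneg (by norm_num) hd0.le
  have hw' : ∑ i : Fin r ⊕ Fin s,
      (Sum.elim (fun _ : Fin r => 1 / d) (fun _ : Fin s => 2 / d)) i = 1 := by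
    rw [Fintype.sum_sum_type]
    simp only [Sum.elim_inl, Sum.elim_inr, Finset.sum_const, Finset.card_univ,
      Fintype.card_fin, nsmul_eq_mul]
    field_simp
    ring
  have hz : ∀ i ∈ (Finset.univ : Finset (Fin r ⊕ Fin s)), 0 ≤
      (Sum.elim (fun i => (a i) ^ 2) (fun j => (b j) ^ 2)) i := by
    rintro (i | j) _ <;> simp only [Sum.elim_inl, Sum.elim_inr] <;> positivity
  have hamgm := Real.geom_mean_le_arith_mean_weighted Finset.univ _ _ hw hw' hz
  rw [Fintype.prod_sum_type, Fintype.sum_sum_type] at hamgm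
  simp only [Sum.elim_inl, Sum.elim_inr] at hamgm
  -- LHS of AM-GM equals ((∏a)(∏b²))^(2/d)
  have hlhs : (∏ i, ((a i) ^ 2 : ℝ) ^ (1 / d)) * ∏ j, ((b j) ^ 2 : ℝ) ^ (2 / d)
      = (((∏ i, a i) * ∏ j, (b j) ^ 2) : ℝ) ^ (2 / d) := by
    have hpa : 0 ≤ ∏ i, a i := Finset.prod_nonneg fun i _ => ha0 i
    rw [Real.finset_prod_rpow _ _ (fun i _ => by positivity) _,
        Real.finset_prod_rpow _ _ (fun j _ => by positivity) _,
        Real.mul_rpow hpa (Finset.prod_nonneg fun j _ => by positivity)]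
    congr 1
    rw [Finset.prod_pow, ← Real.rpow_natCast (∏ i, a i) 2, ← Real.rpow_mul hpa]
    norm_num [div_eq_mul_inv]
  -- η² ≤ ((∏a)(∏b²))^(2/d)
  have heta : η ^ 2 ≤ (((∏ i, a i) * ∏ j, (b j) ^ 2) : ℝ) ^ (2 / d) := by
    have h1 : η ^ 2 = ((η ^ (r + 2 * s) : ℝ)) ^ ((2 : ℝ) / d) := by
      rw [← Real.rpow_natCast η (r + 2 * s), ← Real.rpow_mul hη.le]
      rw [show ((r + 2 * s : ℕ) : ℝ) = d by push_cast [hd]; ring]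
      rw [mul_div_cancel₀ _ hd0.ne']
      norm_num
    rw [h1]
    exact Real.rpow_le_rpow (by positivity) hprod (by positivity)
  rw [hlhs] at hamgm
  set S : ℝ := (∑ i, (ξx i * x i) ^ 2) + ∑ j, ‖(ξy j : ℂ) * y j‖ ^ 2 with hS
  have hSa : S = (∑ i, (a i) ^ 2) + ∑ j, (b j) ^ 2 := by
    simp only [hS, ha, hb, map_mul, norm_mul, Complex.norm_real, Real.norm_eq_abs, mul_pow, sq_abs,
      abs_of_pos (hξy _), abs_of_pos (hξx _)]
  -- η² ≤ (2/d) S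
  have hkey : (d / 2) * η ^ 2 ≤ S := by
    have h2 : (((∏ i, a i) * ∏ j, (b j) ^ 2) : ℝ) ^ (2 / d) ≤ (2 / d) * S := by
      refine hamgm.trans ?_
      rw [hSa, mul_add]
      gcongr ?_ + ?_
      · rw [Finset.mul_sum]
        refine Finset.sum_le_sum fun i _ => ?_
        apply mul_le_mul_of_nonneg_right _ (sq_nonneg (a i))
        rw [div_le_div_iff₀ hd0 hd0]
        nlinarith
      · rw [Finset.mul_sum]
    have := heta.trans h2
    calc (d / 2) * η ^ 2 ≤ (d / 2) * ((2 / d) * S) := by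
          apply mul_le_mul_of_nonneg_left this (by positivity)
      _ = S := by field_simp
  have hS0 : 0 ≤ S := le_trans (by positivity) hkey
  calc Real.sqrt (d / 2) * η = Real.sqrt ((d / 2) * η ^ 2) := by
        rw [Real.sqrt_mul (by positivity), Real.sqrt_sq hη.le]
    _ ≤ Real.sqrt S := Real.sqrt_le_sqrt hkey
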